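/- Let u, v : ℕ → ℝ be two sequences with u(0) = v(0). Then the following are equivalent: (i) for every k ≥ 1, v(k) = ∑_{n=1}^{k} C(k, n) · (-n)^{k-n} · u(n); (ii) for every n ≥ 1, u(n) = ∑_{h=1}^{n} C(n-1, h-1) · n^{n-h} · v(h). -/

import Mathlib

open Finset

lemma binom_sum (x y : ℝ) (d : ℕ) :
    ∑ j ∈ Finset.range (d+1), ((d.choose j : ℝ)) * y^(d-j) * x^j = (x+y)^d := by
  rw [add_pow]
  exact Finset.sum_congr rfl fun j _ => by ring

lemma nat_step1 (m d j : ℕ) :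
    (m+d+1) * ((m+d).choose (m+j)) = (m+d+1).choose (m+j+1) * (m+j+1) := by
  simpa [Nat.succ_eq_add_one] using Nat.add_one_mul_choose_eq (m+d) (m+j)

lemma nat_step2 (m j : ℕ) :
    (m+j+1) * ((m+j+1).choose (m+1))
      = (m+1) * ((m+j+1).choose (m+1)) + (m+2) * ((m+j+1).choose (m+2)) := by
  have h3 := Nat.choose_succ_right_eq (m+j+1) (m+1)
  have h4 : (m+j+1) - (m+1) = j := by omega
  rw [h4] at h3
  -- h3 : (m+j+1).choose (m+2) * (m+2) = (m+j+1).choose (m+1) * j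
  nlinarith [h3]

lemma key_range (m d : ℕ) :
    ∑ j ∈ Finset.range (d+1), (((m+d).choose (m+j)) : ℝ) * ((m+d+1 : ℕ) : ℝ)^(d-j)
      * (((m+j+1).choose (m+1)) : ℝ) * (-((m+1 : ℕ) : ℝ))^j
      = if d = 0 then 1 else 0 := by
  have hX : ((m+d+1 : ℕ) : ℝ) ≠ 0 := Nat.cast_ne_zero.mpr (by omega)
  apply mul_left_cancel₀ hX
  rw [Finset.mul_sum]
  have hterm : ∀ j ∈ Finset.range (d+1),
      ((m+d+1:ℕ):ℝ) * ((((m+d).choose (m+j)) : ℝ) * ((m+d+1:ℕ):ℝ)^(d-j)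
          * (((m+j+1).choose (m+1)) : ℝ) * (-((m+1:ℕ):ℝ))^j)
      = ((m+1:ℕ):ℝ) * (((m+d+1).choose (m+1) : ℕ):ℝ) * ((d.choose j : ℕ):ℝ)
          * (((m+d+1:ℕ):ℝ)^(d-j) * (-((m+1:ℕ):ℝ))^j)
        + ((m+2:ℕ):ℝ) * ((((m+d+1).choose (m+j+1) * (m+j+1).choose (m+2)) : ℕ):ℝ)
          * (((m+d+1:ℕ):ℝ)^(d-j) * (-((m+1:ℕ):ℝ))^j) := by
    intro j hj
    rw [Finset.mem_range] at hj
    have hj' : j ≤ d := by omega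
    have e3 : (m+d+1).choose (m+j+1) * ((m+j+1).choose (m+1))
        = (m+d+1).choose (m+1) * d.choose j := by
      have := Nat.choose_mul (n := m+d+1) (k := m+j+1) (s := m+1) (by omega)
      simpa [show (m+d+1)-(m+1) = d by omega, show (m+j+1)-(m+1) = j by omega] using this
    have e1 : ((m+d+1) * ((m+d).choose (m+j))) * ((m+j+1).choose (m+1))
        = (m+1) * ((m+d+1).choose (m+1) * d.choose j)
          + (m+2) * ((m+d+1).choose (m+j+1) * (m+j+1).choose (m+2)) := by
      rw [nat_step1, mul_assoc, nat_step2, Nat.mul_add, ← e3]; ring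
    have lhs_eq : ((m+d+1:ℕ):ℝ) * ((((m+d).choose (m+j)) : ℝ) * ((m+d+1:ℕ):ℝ)^(d-j)
          * (((m+j+1).choose (m+1)) : ℝ) * (-((m+1:ℕ):ℝ))^j)
        = ((((m+d+1) * ((m+d).choose (m+j))) * ((m+j+1).choose (m+1)) : ℕ) : ℝ)
          * (((m+d+1:ℕ):ℝ)^(d-j) * (-((m+1:ℕ):ℝ))^j) := by
      push_cast; ring
    rw [lhs_eq, e1]
    push_cast; ring
  rw [Finset.sum_congr rfl hterm, Finset.sum_add_distrib]
  have hsumA : ∑ j ∈ Finset.range (d+1), ((m+1:ℕ):ℝ) * (((m+d+1).choose (m+1) : ℕ):ℝ)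
        * ((d.choose j : ℕ):ℝ) * (((m+d+1:ℕ):ℝ)^(d-j) * (-((m+1:ℕ):ℝ))^j)
      = ((m+1:ℕ):ℝ) * (((m+d+1).choose (m+1) : ℕ):ℝ) * (d:ℝ)^d := by
    have h1 : ∀ j ∈ Finset.range (d+1),
        ((m+1:ℕ):ℝ) * (((m+d+1).choose (m+1) : ℕ):ℝ) * ((d.choose j : ℕ):ℝ)
            * (((m+d+1:ℕ):ℝ)^(d-j) * (-((m+1:ℕ):ℝ))^j)
        = (((m+1:ℕ):ℝ) * (((m+d+1).choose (m+1) : ℕ):ℝ))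
            * (((d.choose j : ℕ):ℝ) * ((m+d+1:ℕ):ℝ)^(d-j) * (-((m+1:ℕ):ℝ))^j) := by
      intro j _; ring
    rw [Finset.sum_congr rfl h1, ← Finset.mul_sum, binom_sum]
    have : (-((m+1:ℕ):ℝ)) + ((m+d+1:ℕ):ℝ) = (d:ℝ) := by push_cast; ring
    rw [this]
  rw [hsumA]
  rcases Nat.eq_zero_or_pos d with hd | hd
  · subst hd
    simp [Nat.choose_eq_zero_of_lt (show m+1 < m+2 by omega)]
  · obtain ⟨e, rfl⟩ : ∃ e, d = e + 1 := ⟨d - 1, by omega⟩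
    simp only [← Nat.add_assoc] at hsumA ⊢
    have hsumB : ∑ j ∈ Finset.range (e+1+1), ((m+2:ℕ):ℝ)
          * ((((m+e+1+1).choose (m+j+1) * (m+j+1).choose (m+2)) : ℕ):ℝ)
          * (((m+e+1+1:ℕ):ℝ)^(e+1-j) * (-((m+1:ℕ):ℝ))^j)
        = ((m+2:ℕ):ℝ) * (((m+e+1+1).choose (m+2) : ℕ):ℝ) * (-((m+1:ℕ):ℝ)) * ((e+1:ℕ):ℝ)^e := by
      rw [Finset.sum_range_succ']
      have h0 : ((m+2:ℕ):ℝ) * ((((m+e+1+1).choose (m+0+1) * (m+0+1).choose (m+2)) : ℕ):ℝ)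
          * (((m+e+1+1:ℕ):ℝ)^(e+1-0) * (-((m+1:ℕ):ℝ))^0) = 0 := by
        rw [Nat.choose_eq_zero_of_lt (show m+0+1 < m+2 by omega)]
        push_cast; ring
      rw [h0, add_zero]
      have h2 : ∀ i ∈ Finset.range (e+1), ((m+2:ℕ):ℝ)
            * ((((m+e+1+1).choose (m+(i+1)+1) * (m+(i+1)+1).choose (m+2)) : ℕ):ℝ)
            * (((m+e+1+1:ℕ):ℝ)^(e+1-(i+1)) * (-((m+1:ℕ):ℝ))^(i+1))
          = (((m+2:ℕ):ℝ) * (((m+e+1+1).choose (m+2) : ℕ):ℝ) * (-((m+1:ℕ):ℝ)))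
            * (((e.choose i : ℕ):ℝ) * ((m+e+1+1:ℕ):ℝ)^(e-i) * (-((m+1:ℕ):ℝ))^i) := by
        intro i hi
        rw [Finset.mem_range] at hi
        have e4 : (m+e+1+1).choose (m+(i+1)+1) * (m+(i+1)+1).choose (m+2)
            = (m+e+1+1).choose (m+2) * e.choose i := by
          have := Nat.choose_mul (n := m+e+1+1) (k := m+(i+1)+1) (s := m+2) (by omega)
          simpa [show (m+e+1+1)-(m+2) = e by omega, show (m+(i+1)+1)-(m+2) = i by omega]
            using this
        rw [e4, show e+1-(i+1) = e-i by omega]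
        push_cast; ring
      rw [Finset.sum_congr rfl h2, ← Finset.mul_sum, binom_sum]
      have : (-((m+1:ℕ):ℝ)) + ((m+e+1+1:ℕ):ℝ) = ((e+1:ℕ):ℝ) := by push_cast; ring
      rw [this]
    rw [hsumB]
    have e5 : (m+e+1+1).choose (m+2) * (m+2) = (m+e+1+1).choose (m+1) * (e+1) := by
      have := Nat.choose_succ_right_eq (m+e+1+1) (m+1)
      simpa [show (m+e+1+1)-(m+1) = e+1 by omega] using this
    have e5' : ((m+e+1+1).choose (m+2) : ℝ) * ((m+2:ℕ):ℝ)
        = ((m+e+1+1).choose (m+1) : ℝ) * ((e+1:ℕ):ℝ) := by exact_mod_cast congrArg (Nat.cast (R := ℝ)) e5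
    have hif : (if e+1 = 0 then (1:ℝ) else 0) = 0 := by simp
    rw [hif, mul_zero]
    have hpow : ((e+1:ℕ):ℝ)^(e+1) = ((e+1:ℕ):ℝ) * ((e+1:ℕ):ℝ)^e := by
      rw [pow_succ]; ring
    push_cast at e5' hpow ⊢
    linear_combination (-(((m:ℝ)+1) * ((e:ℝ)+1)^e)) * e5'
      + (((m:ℝ)+1) * (((m + e + 1 + 1).choose (m + 1)):ℝ)) * hpow

lemma key_Icc (m n : ℕ) (hm : 1 ≤ m) (hmn : m ≤ n) :
    ∑ h ∈ Finset.Icc m n, ((n-1).choose (h-1) : ℝ) * (n:ℝ)^(n-h)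
      * ((h.choose m) : ℝ) * (-(m:ℝ))^(h-m)
      = if n = m then 1 else 0 := by
  obtain ⟨m', rfl⟩ : ∃ m', m = m'+1 := ⟨m-1, by omega⟩
  obtain ⟨d, rfl⟩ : ∃ d, n = m'+d+1 := ⟨n-(m'+1), by omega⟩
  rw [← Finset.Ico_add_one_right_eq_Icc, Finset.sum_Ico_eq_sum_range,
    show m'+d+1+1-(m'+1) = d+1 by omega]
  have hcong : ∀ j ∈ Finset.range (d+1),
      ((m'+d+1-1).choose (m'+1+j-1) : ℝ) * ((m'+d+1 : ℕ):ℝ)^(m'+d+1-(m'+1+j))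
        * (((m'+1+j).choose (m'+1)) : ℝ) * (-((m'+1 : ℕ):ℝ))^(m'+1+j-(m'+1))
      = ((m'+d).choose (m'+j) : ℝ) * ((m'+d+1 : ℕ) : ℝ)^(d-j)
        * (((m'+j+1).choose (m'+1)) : ℝ) * (-((m'+1 : ℕ) : ℝ))^j := by
    intro j hj
    rw [show m'+d+1-1 = m'+d by omega, show m'+1+j-1 = m'+j by omega,
      show m'+d+1-(m'+1+j) = d-j by omega, show m'+1+j-(m'+1) = j by omega,
      show m'+1+j = m'+j+1 by omega]
  rw [Finset.sum_congr rfl hcong, key_range]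
  by_cases hd : d = 0 <;> simp [hd]

lemma swap_Icc (n : ℕ) (F : ℕ → ℕ → ℝ) :
    ∑ h ∈ Finset.Icc 1 n, ∑ m ∈ Finset.Icc 1 h, F h m
      = ∑ m ∈ Finset.Icc 1 n, ∑ h ∈ Finset.Icc m n, F h m := by
  simp_rw [← Finset.Ico_add_one_right_eq_Icc]
  exact (Finset.sum_Ico_Ico_comm 1 (n+1) (fun i j => F j i)).symm

lemma forward (u v : ℕ → ℝ)
    (hi : ∀ k : ℕ, 1 ≤ k →
      v k = ∑ n ∈ Finset.Icc 1 k, (k.choose n : ℝ) * (-(n : ℝ)) ^ (k - n) * u n)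
    (n : ℕ) (hn : 1 ≤ n) :
    u n = ∑ h ∈ Finset.Icc 1 n,
      ((n - 1).choose (h - 1) : ℝ) * (n : ℝ) ^ (n - h) * v h := by
  have step1 : ∑ h ∈ Finset.Icc 1 n, ((n - 1).choose (h - 1) : ℝ) * (n : ℝ) ^ (n - h) * v h
      = ∑ h ∈ Finset.Icc 1 n, ∑ m ∈ Finset.Icc 1 h,
        ((n - 1).choose (h - 1) : ℝ) * (n : ℝ) ^ (n - h)
          * ((h.choose m : ℝ) * (-(m : ℝ)) ^ (h - m) * u m) := by
    refine Finset.sum_congr rfl fun h hh => ?_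
    rw [Finset.mem_Icc] at hh
    rw [hi h hh.1, Finset.mul_sum]
  rw [step1, swap_Icc]
  have step2 : ∀ m ∈ Finset.Icc 1 n,
      (∑ h ∈ Finset.Icc m n, ((n - 1).choose (h - 1) : ℝ) * (n : ℝ) ^ (n - h)
          * ((h.choose m : ℝ) * (-(m : ℝ)) ^ (h - m) * u m))
      = (if n = m then 1 else 0) * u m := by
    intro m hm
    rw [Finset.mem_Icc] at hm
    have : ∀ h ∈ Finset.Icc m n,
        ((n - 1).choose (h - 1) : ℝ) * (n : ℝ) ^ (n - h)
          * ((h.choose m : ℝ) * (-(m : ℝ)) ^ (h - m) * u m)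
        = (((n-1).choose (h-1) : ℝ) * (n:ℝ)^(n-h) * ((h.choose m) : ℝ) * (-(m:ℝ))^(h-m)) * u m :=
      fun h _ => by ring
    rw [Finset.sum_congr rfl this, ← Finset.sum_mul, key_Icc m n hm.1 hm.2]
  rw [Finset.sum_congr rfl step2]
  simp only [ite_mul, one_mul, zero_mul]
  rw [Finset.sum_ite_eq]
  simp [hn]

theorem associated_series_inversion (u v : ℕ → ℝ) (h0 : u 0 = v 0) :
    (∀ k : ℕ, 1 ≤ k →
        v k = ∑ n ∈ Finset.Icc 1 k, (k.choose n : ℝ) * (-(n : ℝ)) ^ (k - n) * u n)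
      ↔
    (∀ n : ℕ, 1 ≤ n →
        u n = ∑ h ∈ Finset.Icc 1 n,
          ((n - 1).choose (h - 1) : ℝ) * (n : ℝ) ^ (n - h) * v h) := by
  constructor
  · exact fun hi => forward u v hi
  · intro hii
    set w : ℕ → ℝ := fun k => ∑ n ∈ Finset.Icc 1 k, (k.choose n : ℝ) * (-(n : ℝ)) ^ (k - n) * u n
      with hw
    have hwi : ∀ k : ℕ, 1 ≤ k →
        w k = ∑ n ∈ Finset.Icc 1 k, (k.choose n : ℝ) * (-(n : ℝ)) ^ (k - n) * u n :=
      fun k _ => rfl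
    have hwii := forward u w hwi
    have claim : ∀ k : ℕ, 1 ≤ k → w k = v k := by
      intro k
      induction k using Nat.strong_induction_on with
      | _ k ih =>
        intro hk
        obtain ⟨k', rfl⟩ : ∃ k', k = k' + 1 := ⟨k - 1, by omega⟩
        have h1 := hwii (k'+1) (by omega)
        have h2 := hii (k'+1) (by omega)
        rw [Finset.sum_Icc_succ_top (by omega)] at h1 h2
        have hlow : ∑ h ∈ Finset.Icc 1 k',
              ((k'+1-1).choose (h-1) : ℝ) * ((k'+1 : ℕ):ℝ)^(k'+1-h) * w h
            = ∑ h ∈ Finset.Icc 1 k',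
              ((k'+1-1).choose (h-1) : ℝ) * ((k'+1 : ℕ):ℝ)^(k'+1-h) * v h := by
          refine Finset.sum_congr rfl fun h hh => ?_
          rw [Finset.mem_Icc] at hh
          rw [ih h (by omega) hh.1]
        have htop : ((k'+1-1).choose (k'+1-1) : ℝ) * ((k'+1 : ℕ):ℝ)^(k'+1-(k'+1)) = 1 := by
          simp
        rw [hlow] at h1
        rw [htop, one_mul] at h1 h2
        linarith
    intro k hk
    rw [← claim k hk]
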